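/- There exist universal constants $c_1, c_2 > 0$ such that for every sequence $X_1, X_2, \dots$ of independent identically distributed random variables with values in a Banach space, with partial sums $S_j = \sum_{i=1}^j X_i$, all integers $1 \le k \le j$, and all $t > 0$, $\Pr(\|S_j\| > t) \le c_1 \frac{j}{k}\, \Pr\big(\|S_k\| > \frac{k t}{c_2 j}\big)$. -/

import Mathlib

open MeasureTheory ProbabilityTheory
open scoped ENNReal

section Aux

set_option linter.unusedSectionVars false

variable {Ω : Type} [MeasurableSpace Ω] {P : Measure Ω} [IsProbabilityMeasure P]
variable {E : Type} [NormedAddCommGroup E] [NormedSpace ℝ E]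
  [MeasurableSpace E] [BorelSpace E] [SecondCountableTopology E]

lemma aux_indep_sum {X : ℕ → Ω → E} (hX : ∀ i, Measurable (X i))
    (hind : iIndepFun X P) {S T : Finset ℕ} (h : Disjoint S T) :
    IndepFun (fun ω => ∑ i ∈ S, X i ω) (fun ω => ∑ i ∈ T, X i ω) P := by
  classical
  have h1 := hind.indepFun_finset S T h hX
  have hφS : Measurable (fun p : S → E => ∑ i, p i) :=
    Finset.measurable_sum _ (fun i _ => measurable_pi_apply i)
  have hφT : Measurable (fun p : T → E => ∑ i, p i) :=
    Finset.measurable_sum _ (fun i _ => measurable_pi_apply i)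
  have h2 := h1.comp hφS hφT
  have e1 : ((fun p : S → E => ∑ i, p i) ∘ fun a (i : S) => X i a)
      = fun ω => ∑ i ∈ S, X i ω := by
    funext ω; simp only [Function.comp_apply]; exact Finset.sum_coe_sort S (fun i => X i ω)
  have e2 : ((fun p : T → E => ∑ i, p i) ∘ fun a (i : T) => X i a)
      = fun ω => ∑ i ∈ T, X i ω := by
    funext ω; simp only [Function.comp_apply]; exact Finset.sum_coe_sort T (fun i => X i ω)
  rwa [e1, e2] at h2

lemma aux_add_ident {U V U' V' : Ω → E} (hU : Measurable U) (hV : Measurable V)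
    (hU' : Measurable U') (hV' : Measurable V')
    (hUV : IndepFun U V P) (hU'V' : IndepFun U' V' P)
    (h1 : IdentDistrib U U' P P) (h2 : IdentDistrib V V' P P) :
    IdentDistrib (fun ω => U ω + V ω) (fun ω => U' ω + V' ω) P P := by
  have hpair : IdentDistrib (fun ω => (U ω, V ω)) (fun ω => (U' ω, V' ω)) P P := by
    refine ⟨(hU.prodMk hV).aemeasurable, (hU'.prodMk hV').aemeasurable, ?_⟩
    rw [(indepFun_iff_map_prod_eq_prod_map_map hU.aemeasurable hV.aemeasurable).1 hUV,
        (indepFun_iff_map_prod_eq_prod_map_map hU'.aemeasurable hV'.aemeasurable).1 hU'V',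
        h1.map_eq, h2.map_eq]
  exact hpair.comp measurable_add

lemma aux_blocks_ident {X : ℕ → Ω → E} (hX : ∀ i, Measurable (X i))
    (hind : iIndepFun X P)
    (hid : ∀ i, IdentDistrib (X i) (X 0) P P) :
    ∀ (n : ℕ) (B C : Finset ℕ), B.card = n → C.card = n →
      IdentDistrib (fun ω => ∑ i ∈ B, X i ω) (fun ω => ∑ i ∈ C, X i ω) P P := by
  classical
  intro n
  induction n with
  | zero =>
    intro B C hB hC
    rw [Finset.card_eq_zero] at hB hC; subst hB; subst hC
    simp only [Finset.sum_empty]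
    exact IdentDistrib.refl aemeasurable_const
  | succ n ih =>
    intro B C hB hC
    obtain ⟨b, hb⟩ : B.Nonempty := Finset.card_pos.1 (by omega)
    obtain ⟨c, hc⟩ : C.Nonempty := Finset.card_pos.1 (by omega)
    have hBc : (B.erase b).card = n := by rw [Finset.card_erase_of_mem hb, hB]; omega
    have hCc : (C.erase c).card = n := by rw [Finset.card_erase_of_mem hc, hC]; omega
    have hib : IndepFun (X b) (fun ω => ∑ i ∈ B.erase b, X i ω) P := by
      have h0 := aux_indep_sum hX hind (Finset.disjoint_singleton_left.2 (Finset.notMem_erase b B))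
      have e : (fun ω => ∑ i ∈ ({b} : Finset ℕ), X i ω) = X b := by
        funext ω; simp
      rwa [e] at h0
    have hic : IndepFun (X c) (fun ω => ∑ i ∈ C.erase c, X i ω) P := by
      have h0 := aux_indep_sum hX hind (Finset.disjoint_singleton_left.2 (Finset.notMem_erase c C))
      have e : (fun ω => ∑ i ∈ ({c} : Finset ℕ), X i ω) = X c := by
        funext ω; simp
      rwa [e] at h0
    have hmB : Measurable (fun ω => ∑ i ∈ B.erase b, X i ω) :=
      Finset.measurable_sum _ (fun i _ => hX i)
    have hmC : Measurable (fun ω => ∑ i ∈ C.erase c, X i ω) :=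
      Finset.measurable_sum _ (fun i _ => hX i)
    have key := aux_add_ident (hX b) hmB (hX c) hmC
      hib hic
      ((hid b).trans (hid c).symm) (ih _ _ hBc hCc)
    have e1 : (fun ω => X b ω + ∑ i ∈ B.erase b, X i ω) = fun ω => ∑ i ∈ B, X i ω := by
      funext ω; exact Finset.add_sum_erase B (fun i => X i ω) hb
    have e2 : (fun ω => X c ω + ∑ i ∈ C.erase c, X i ω) = fun ω => ∑ i ∈ C, X i ω := by
      funext ω; exact Finset.add_sum_erase C (fun i => X i ω) hc
    rwa [e1, e2] at key

lemma aux_pick {U V : Ω → E} (hU : Measurable U) (hV : Measurable V)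
    (hUV : IndepFun U V P) (s : ℝ) :
    ∃ y : E, P {ω | s < ‖U ω + y‖} ≤ P {ω | s < ‖U ω + V ω‖} := by
  have hA : MeasurableSet {p : E × E | s < ‖p.1 + p.2‖} :=
    measurableSet_lt measurable_const measurable_add.norm
  have hmap : P.map (fun ω => (V ω, U ω)) = (P.map V).prod (P.map U) :=
    (indepFun_iff_map_prod_eq_prod_map_map hV.aemeasurable hU.aemeasurable).1 hUV.symm
  haveI hPU : IsProbabilityMeasure (P.map U) := Measure.isProbabilityMeasure_map hU.aemeasurable
  haveI hPV : IsProbabilityMeasure (P.map V) := Measure.isProbabilityMeasure_map hV.aemeasurable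
  have hmeasf : Measurable (fun y : E =>
      (P.map U) (Prod.mk y ⁻¹' {p : E × E | s < ‖p.1 + p.2‖})) :=
    measurable_measure_prodMk_left hA
  have heq : P {ω | s < ‖U ω + V ω‖}
      = ∫⁻ y, (P.map U) (Prod.mk y ⁻¹' {p : E × E | s < ‖p.1 + p.2‖}) ∂(P.map V) := by
    rw [← Measure.prod_apply hA, ← hmap, Measure.map_apply (hV.prodMk hU) hA]
    congr 1
    ext ω
    simp [add_comm]
  obtain ⟨y, hy⟩ := exists_le_lintegral (μ := P.map V) hmeasf.aemeasurable
  refine ⟨y, ?_⟩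
  rw [heq]
  refine le_trans (le_of_eq ?_) hy
  have hA1 : MeasurableSet {x : E | s < ‖y + x‖} :=
    measurableSet_lt measurable_const (measurable_const.add measurable_id).norm
  rw [show (Prod.mk y ⁻¹' {p : E × E | s < ‖p.1 + p.2‖}) = {x : E | s < ‖y + x‖} from rfl,
    Measure.map_apply hU hA1]
  congr 1
  ext ω
  simp [add_comm]


lemma aux_small_sum {X : ℕ → Ω → E} (hX : ∀ i, Measurable (X i))
    (hind : iIndepFun X P)
    (hid : ∀ i, IdentDistrib (X i) (X 0) P P)
    {k : ℕ} (hk : 1 ≤ k) {s : ℝ} (hs : 0 < s)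
    (hp : P {ω | s < ‖∑ i ∈ Finset.range k, X i ω‖} < 1/3) :
    ∀ r, 1 ≤ r → r ≤ k → ∀ B : Finset ℕ, B.card = r →
      P {ω | 16*s < ‖∑ i ∈ B, X i ω‖} ≤ P {ω | s < ‖∑ i ∈ Finset.range k, X i ω‖} := by
  classical
  set p := P {ω | s < ‖∑ i ∈ Finset.range k, X i ω‖} with hpdef
  have hSmeas : ∀ B : Finset ℕ, Measurable (fun ω => ∑ i ∈ B, X i ω) :=
    fun B => Finset.measurable_sum _ (fun i _ => hX i)
  have htrans : ∀ (B C : Finset ℕ), B.card = C.card → ∀ a : E,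
      P {ω | s < ‖∑ i ∈ B, X i ω - a‖} = P {ω | s < ‖∑ i ∈ C, X i ω - a‖} := by
    intro B C hcard a
    have h1 := (aux_blocks_ident hX hind hid B.card B C rfl hcard.symm).comp
      (u := fun x : E => x - a) (measurable_id.sub_const a)
    exact h1.measure_mem_eq (measurableSet_lt measurable_const measurable_norm)
  have hconc : ∀ r, 1 ≤ r ∧ r < k →
      ∃ a : E, P {ω | s < ‖∑ i ∈ Finset.range r, X i ω - a‖} ≤ p := by
    rintro r ⟨h1, h2⟩
    have hdisj : Disjoint (Finset.range r) (Finset.Ico r k) := by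
      rw [Finset.range_eq_Ico]; exact Finset.Ico_disjoint_Ico_consecutive 0 r k
    have hindep := aux_indep_sum hX hind hdisj
    obtain ⟨y, hy⟩ := aux_pick (hSmeas _) (hSmeas _) hindep s
    refine ⟨-y, ?_⟩
    have e1 : {ω | s < ‖∑ i ∈ Finset.range r, X i ω - -y‖}
        = {ω | s < ‖∑ i ∈ Finset.range r, X i ω + y‖} := by
      simp only [sub_neg_eq_add]
    have e2 : {ω : Ω | s < ‖(∑ i ∈ Finset.range r, X i ω) + ∑ i ∈ Finset.Ico r k, X i ω‖}
        = {ω : Ω | s < ‖∑ i ∈ Finset.range k, X i ω‖} := by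
      have e3 : ∀ ω, (∑ i ∈ Finset.range r, X i ω) + ∑ i ∈ Finset.Ico r k, X i ω
          = ∑ i ∈ Finset.range k, X i ω := by
        intro ω
        simp only [Finset.range_eq_Ico]
        exact Finset.sum_Ico_consecutive _ (Nat.zero_le r) (le_of_lt h2)
      simp only [e3]
    rw [e1, hpdef]
    rw [e2] at hy
    exact hy
  obtain ⟨A, hAk, hA⟩ : ∃ A : ℕ → E, A k = 0 ∧ ∀ r, 1 ≤ r → r ≤ k →
      P {ω | s < ‖∑ i ∈ Finset.range r, X i ω - A r‖} ≤ p := by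
    refine ⟨fun r => if h : 1 ≤ r ∧ r < k then Classical.choose (hconc r h) else 0,
      dif_neg (by omega), ?_⟩
    intro r h1 h2
    by_cases hrk : r = k
    · have e : (fun r => if h : 1 ≤ r ∧ r < k then Classical.choose (hconc r h) else (0:E)) r
          = 0 := dif_neg (by omega)
      rw [e, hrk]
      simp only [sub_zero]
      exact hpdef.ge
    · have h2' : r < k := lt_of_le_of_ne h2 hrk
      have e : (fun r => if h : 1 ≤ r ∧ r < k then Classical.choose (hconc r h) else (0:E)) r
          = Classical.choose (hconc r ⟨h1, h2'⟩) := dif_pos ⟨h1, h2'⟩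
      rw [e]
      exact Classical.choose_spec (hconc r ⟨h1, h2'⟩)
  -- approximate additivity of the centers
  have hadd : ∀ r1 r2 : ℕ, ∀ a1 a2 a3 : E, 1 ≤ r1 → 1 ≤ r2 → r1 + r2 ≤ k →
      P {ω | s < ‖∑ i ∈ Finset.range r1, X i ω - a1‖} ≤ p →
      P {ω | s < ‖∑ i ∈ Finset.range r2, X i ω - a2‖} ≤ p →
      P {ω | s < ‖∑ i ∈ Finset.range (r1+r2), X i ω - a3‖} ≤ p →
      ‖a3 - a1 - a2‖ ≤ 3*s := by
    intro r1 r2 a1 a2 a3 h1 h2 h12 hc1 hc2 hc3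
    have hc2' : P {ω | s < ‖∑ i ∈ Finset.Ico r1 (r1+r2), X i ω - a2‖} ≤ p := by
      rw [htrans (Finset.Ico r1 (r1+r2)) (Finset.range r2) (by simp) a2]
      exact hc2
    have hne : (({ω | s < ‖∑ i ∈ Finset.range (r1+r2), X i ω - a3‖}
        ∪ {ω | s < ‖∑ i ∈ Finset.range r1, X i ω - a1‖}
        ∪ {ω | s < ‖∑ i ∈ Finset.Ico r1 (r1+r2), X i ω - a2‖})ᶜ).Nonempty := by
      apply nonempty_of_measure_ne_zero (μ := P)
      intro h0
      have huni : (1:ℝ≥0∞) ≤ p + p + p := by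
        have h1' := measure_union_le (μ := P)
          ({ω | s < ‖∑ i ∈ Finset.range (r1+r2), X i ω - a3‖}
            ∪ {ω | s < ‖∑ i ∈ Finset.range r1, X i ω - a1‖}
            ∪ {ω | s < ‖∑ i ∈ Finset.Ico r1 (r1+r2), X i ω - a2‖})
          (({ω | s < ‖∑ i ∈ Finset.range (r1+r2), X i ω - a3‖}
            ∪ {ω | s < ‖∑ i ∈ Finset.range r1, X i ω - a1‖}
            ∪ {ω | s < ‖∑ i ∈ Finset.Ico r1 (r1+r2), X i ω - a2‖})ᶜ)
        rw [Set.union_compl_self, measure_univ, h0, add_zero] at h1'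
        refine le_trans h1' ?_
        refine le_trans (measure_union_le _ _) ?_
        refine add_le_add (le_trans (measure_union_le _ _) (add_le_add hc3 hc1)) hc2'
      have hlt : p + p + p < 1 := by
        have e : p + p + p = 3 * p := by ring
        rw [e]
        calc 3 * p < 3 * (1/3) := ENNReal.mul_right_strictMono (by norm_num) (by norm_num) hp
          _ = 1 := by
            rw [one_div, ENNReal.mul_inv_cancel (by norm_num) (by norm_num)]
      exact absurd (lt_of_le_of_lt huni hlt) (lt_irrefl _)
    obtain ⟨ω, hω⟩ := hne
    simp only [Set.mem_compl_iff, Set.mem_union, not_or, Set.mem_setOf_eq, not_lt] at hω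
    obtain ⟨⟨hw3, hw1⟩, hw2⟩ := hω
    have hsum : ∑ i ∈ Finset.range (r1+r2), X i ω
        = ∑ i ∈ Finset.range r1, X i ω + ∑ i ∈ Finset.Ico r1 (r1+r2), X i ω := by
      simp only [Finset.range_eq_Ico]
      exact (Finset.sum_Ico_consecutive _ (Nat.zero_le r1) (Nat.le_add_right r1 r2)).symm
    have key : a3 - a1 - a2 = ((∑ i ∈ Finset.range r1, X i ω - a1)
        + (∑ i ∈ Finset.Ico r1 (r1+r2), X i ω - a2))
        - (∑ i ∈ Finset.range (r1+r2), X i ω - a3) := by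
      rw [hsum]; abel
    calc ‖a3 - a1 - a2‖
        = ‖((∑ i ∈ Finset.range r1, X i ω - a1)
            + (∑ i ∈ Finset.Ico r1 (r1+r2), X i ω - a2))
            - (∑ i ∈ Finset.range (r1+r2), X i ω - a3)‖ := by rw [key]
      _ ≤ ‖(∑ i ∈ Finset.range r1, X i ω - a1)
            + (∑ i ∈ Finset.Ico r1 (r1+r2), X i ω - a2)‖
            + ‖∑ i ∈ Finset.range (r1+r2), X i ω - a3‖ := norm_sub_le _ _
      _ ≤ (‖∑ i ∈ Finset.range r1, X i ω - a1‖
            + ‖∑ i ∈ Finset.Ico r1 (r1+r2), X i ω - a2‖)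
            + ‖∑ i ∈ Finset.range (r1+r2), X i ω - a3‖ := by
          gcongr
          exact norm_add_le _ _
      _ ≤ (s + s) + s := by
          refine add_le_add (add_le_add hw1 hw2) hw3
      _ = 3*s := by ring
  -- dyadic doubling
  have hdy : ∀ (L r : ℕ), 1 ≤ r → 2^L * r ≤ k →
      ‖A (2^L * r) - ((2:ℝ)^L) • A r‖ ≤ 3*((2:ℝ)^L - 1)*s := by
    intro L
    induction L with
    | zero =>
      intro r hr hle
      simp only [pow_zero, one_mul, one_smul, sub_self, norm_zero]
      norm_num
    | succ L ih =>
      intro r hr hle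
      have hr2 : 1 ≤ 2^L * r := Nat.mul_pos (pow_pos (by norm_num) L) hr
      have hle' : 2^L * r ≤ k :=
        le_trans (Nat.mul_le_mul_right r (Nat.pow_le_pow_right (by norm_num) (Nat.le_succ L))) hle
      have heq : 2^(L+1) * r = 2^L * r + 2^L * r := by ring
      have hc3 : P {ω | s < ‖∑ i ∈ Finset.range (2^L*r + 2^L*r), X i ω - A (2^(L+1)*r)‖} ≤ p := by
        rw [← heq]
        exact hA _ (le_trans hr2 (by omega)) hle
      have h3 : ‖A (2^(L+1)*r) - A (2^L*r) - A (2^L*r)‖ ≤ 3*s := by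
        have h12 : 2^L*r + 2^L*r ≤ k := heq ▸ hle
        have := hadd (2^L*r) (2^L*r) (A (2^L*r)) (A (2^L*r)) (A (2^(L+1)*r)) hr2 hr2 h12
          (hA _ hr2 hle') (hA _ hr2 hle') hc3
        exact this
      have ih' := ih r hr hle'
      have e : A (2^(L+1)*r) - ((2:ℝ)^(L+1)) • A r
          = (A (2^(L+1)*r) - A (2^L*r) - A (2^L*r))
            + ((2:ℝ) • (A (2^L*r) - ((2:ℝ)^L) • A r)) := by
        have e2 : ((2:ℝ)^(L+1)) • A r = (2:ℝ) • (((2:ℝ)^L) • A r) := by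
          rw [← mul_smul]; ring_nf
        rw [e2]
        module
      calc ‖A (2^(L+1)*r) - ((2:ℝ)^(L+1)) • A r‖
          ≤ ‖A (2^(L+1)*r) - A (2^L*r) - A (2^L*r)‖
            + ‖(2:ℝ) • (A (2^L*r) - ((2:ℝ)^L) • A r)‖ := by rw [e]; exact norm_add_le _ _
        _ = ‖A (2^(L+1)*r) - A (2^L*r) - A (2^L*r)‖
            + 2 * ‖A (2^L*r) - ((2:ℝ)^L) • A r‖ := by
            rw [norm_smul]
            norm_num
        _ ≤ 3*s + 2*(3*((2:ℝ)^L - 1)*s) := by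
            refine add_le_add h3 ?_
            linarith
        _ = 3*((2:ℝ)^(L+1) - 1)*s := by ring
  -- the dyadic representative in (k/2, k]
  have hRfact : ∀ r, 1 ≤ r → r ≤ k →
      2^(Nat.log 2 (k/r)) * r ≤ k ∧ k < 2*(2^(Nat.log 2 (k/r)) * r) := by
    intro r h1 h2
    have hr0 : 0 < r := h1
    have hkr : k / r ≠ 0 := by
      have := (Nat.one_le_div_iff hr0).2 h2
      omega
    constructor
    · calc 2^(Nat.log 2 (k/r)) * r ≤ (k/r) * r :=
          Nat.mul_le_mul_right r (Nat.pow_log_le_self 2 hkr)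
        _ ≤ k := Nat.div_mul_le_self k r
    · have h3 : k / r < 2^(Nat.log 2 (k/r) + 1) := Nat.lt_pow_succ_log_self (by norm_num) (k/r)
      have h4 : k < 2^(Nat.log 2 (k/r) + 1) * r := (Nat.div_lt_iff_lt_mul hr0).1 h3
      calc k < 2^(Nat.log 2 (k/r)+1) * r := h4
        _ = 2*(2^(Nat.log 2 (k/r))*r) := by ring
  have hkT : k ∈ (Finset.Icc 1 k).filter (fun R => k < 2*R) := by
    simp only [Finset.mem_filter, Finset.mem_Icc]
    omega
  have hTne : ((Finset.Icc 1 k).filter (fun R => k < 2*R)).Nonempty := ⟨k, hkT⟩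
  set g := ((Finset.Icc 1 k).filter (fun R => k < 2*R)).sup' hTne (fun R => ‖A R‖) with hgdef
  have hg0 : 0 ≤ g := by
    rw [hgdef]
    exact le_trans (norm_nonneg (A k)) (Finset.le_sup' (fun R => ‖A R‖) hkT)
  have hmemT : ∀ r, 1 ≤ r → r ≤ k →
      2^(Nat.log 2 (k/r)) * r ∈ (Finset.Icc 1 k).filter (fun R => k < 2*R) := by
    intro r h1 h2
    obtain ⟨ha, hb⟩ := hRfact r h1 h2
    simp only [Finset.mem_filter, Finset.mem_Icc]
    have h0 : 0 < 2^(Nat.log 2 (k/r))*r := Nat.mul_pos (pow_pos (by norm_num) _) h1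
    exact ⟨⟨h0, ha⟩, hb⟩
  have hgen : ∀ r, 1 ≤ r → r ≤ k →
      (2:ℝ)^(Nat.log 2 (k/r)) * ‖A r‖ ≤ g + 3*((2:ℝ)^(Nat.log 2 (k/r)) - 1)*s := by
    intro r h1 h2
    obtain ⟨ha, _⟩ := hRfact r h1 h2
    have hd := hdy (Nat.log 2 (k/r)) r h1 ha
    have hAR : ‖A (2^(Nat.log 2 (k/r)) * r)‖ ≤ g := by
      rw [hgdef]
      exact Finset.le_sup' (fun R => ‖A R‖) (hmemT r h1 h2)
    calc (2:ℝ)^(Nat.log 2 (k/r)) * ‖A r‖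
        = ‖((2:ℝ)^(Nat.log 2 (k/r))) • A r‖ := by
          rw [norm_smul, Real.norm_eq_abs, abs_of_nonneg (by positivity)]
      _ = ‖A (2^(Nat.log 2 (k/r)) * r) - (A (2^(Nat.log 2 (k/r)) * r)
            - ((2:ℝ)^(Nat.log 2 (k/r))) • A r)‖ := by rw [sub_sub_cancel]
      _ ≤ ‖A (2^(Nat.log 2 (k/r)) * r)‖
            + ‖A (2^(Nat.log 2 (k/r)) * r) - ((2:ℝ)^(Nat.log 2 (k/r))) • A r‖ :=
          norm_sub_le _ _
      _ ≤ g + 3*((2:ℝ)^(Nat.log 2 (k/r)) - 1)*s := add_le_add hAR hd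
  have hAr_le : ∀ r, 1 ≤ r → r ≤ k → ‖A r‖ ≤ g + 3*s := by
    intro r h1 h2
    have h3 := hgen r h1 h2
    have hX1 : (1:ℝ) ≤ (2:ℝ)^(Nat.log 2 (k/r)) := one_le_pow₀ (by norm_num)
    nlinarith [norm_nonneg (A r), hg0, hs, mul_nonneg (sub_nonneg.2 hX1) hg0,
      mul_nonneg (sub_nonneg.2 hX1) (norm_nonneg (A r))]
  have hg12 : g ≤ 12*s := by
    have hsup : ∀ R ∈ (Finset.Icc 1 k).filter (fun R => k < 2*R), ‖A R‖ ≤ 6*s + g/2 := by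
      intro R hR
      simp only [Finset.mem_filter, Finset.mem_Icc] at hR
      obtain ⟨⟨hR1, hRk⟩, hk2R⟩ := hR
      by_cases hRk' : R = k
      · rw [hRk', hAk, norm_zero]
        linarith
      · have hRltk : R < k := lt_of_le_of_ne hRk hRk'
        have h1r' : 1 ≤ k - R := by omega
        have h2r' : 2*(k-R) ≤ k := by omega
        have hr'k : k - R ≤ k := by omega
        have h3 : ‖(0:E) - A R - A (k-R)‖ ≤ 3*s := by
          refine hadd R (k-R) (A R) (A (k-R)) 0 hR1 h1r' (by omega)
            (hA R hR1 hRk) (hA (k-R) h1r' hr'k) ?_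
          have hRr : R + (k - R) = k := by omega
          rw [hRr]
          simp only [sub_zero]
          exact hpdef.ge
        have h4 : ‖A R‖ ≤ 3*s + ‖A (k-R)‖ := by
          have e : A R = -((0:E) - A R - A (k-R)) - A (k-R) := by abel
          calc ‖A R‖ = ‖-((0:E) - A R - A (k-R)) - A (k-R)‖ := by rw [← e]
            _ ≤ ‖-((0:E) - A R - A (k-R))‖ + ‖A (k-R)‖ := norm_sub_le _ _
            _ = ‖(0:E) - A R - A (k-R)‖ + ‖A (k-R)‖ := by rw [norm_neg]
            _ ≤ 3*s + ‖A (k-R)‖ := by linarith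
        have hL1 : 1 ≤ Nat.log 2 (k / (k-R)) := by
          have h2 : 2 ≤ k / (k-R) := (Nat.le_div_iff_mul_le h1r').2 (by omega)
          exact (Nat.le_log_iff_pow_le (b := 2) (y := k / (k-R)) (by norm_num) (by omega)).2 (by simpa using h2)
        have hgen' := hgen (k-R) h1r' hr'k
        have hX2 : (2:ℝ) ≤ (2:ℝ)^(Nat.log 2 (k/(k-R))) := by
          calc (2:ℝ) = 2^1 := (pow_one 2).symm
            _ ≤ 2^(Nat.log 2 (k/(k-R))) := pow_le_pow_right₀ (by norm_num) hL1
        have h5 : ‖A (k-R)‖ ≤ 3*s + g/2 := by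
          nlinarith [norm_nonneg (A (k-R)), hg0, hs,
            mul_nonneg (sub_nonneg.2 (le_trans (by norm_num : (1:ℝ) ≤ 2) hX2)) hg0,
            mul_nonneg (sub_nonneg.2 (le_trans (by norm_num : (1:ℝ) ≤ 2) hX2))
              (norm_nonneg (A (k-R)))]
        linarith
    have hfin := Finset.sup'_le hTne (fun R => ‖A R‖) hsup
    rw [← hgdef] at hfin
    linarith
  -- conclusion
  intro r h1 h2 B hB
  have h3 : P {ω | s < ‖∑ i ∈ B, X i ω - A r‖} ≤ p := by
    rw [htrans B (Finset.range r) (by simp [hB]) (A r)]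
    exact hA r h1 h2
  refine le_trans (measure_mono ?_) h3
  intro ω hω
  simp only [Set.mem_setOf_eq] at hω ⊢
  have h4 := norm_sub_norm_le (∑ i ∈ B, X i ω) (A r)
  have h5 := hAr_le r h1 h2
  linarith

end Aux

/-- Corollary 6: there exist universal constants `c₁, c₂ > 0` such that for i.i.d.
Banach-space valued random variables with partial sums `S_j`, for `1 ≤ k ≤ j` and
`t > 0`, `P(‖S_j‖ > t) ≤ c₁ (j/k) P(‖S_k‖ > k t / (c₂ j))`. -/
theorem sums_iid_comparison_reverse :
    ∃ c₁ c₂ : ℝ, 0 < c₁ ∧ 0 < c₂ ∧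
      ∀ (Ω : Type) (_ : MeasurableSpace Ω) (P : Measure Ω), IsProbabilityMeasure P →
      ∀ (E : Type) [NormedAddCommGroup E] [NormedSpace ℝ E] [CompleteSpace E]
        [MeasurableSpace E] [BorelSpace E] [SecondCountableTopology E]
        (X : ℕ → Ω → E), (∀ i, Measurable (X i)) →
        iIndepFun X P →
        (∀ i, IdentDistrib (X i) (X 0) P P) →
        ∀ (j k : ℕ), 1 ≤ k → k ≤ j → ∀ (t : ℝ), 0 < t →
          P {ω | t < ‖∑ i ∈ Finset.range j, X i ω‖} ≤
            ENNReal.ofReal (c₁ * (j : ℝ) / (k : ℝ)) *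
              P {ω | (k : ℝ) * t / (c₂ * (j : ℝ)) < ‖∑ i ∈ Finset.range k, X i ω‖} := by
  refine ⟨3, 32, by norm_num, by norm_num, ?_⟩
  intro Ω mΩ P hP E _ _ _ _ _ _ X hX hind hid j k hk hkj t ht
  haveI := hP
  classical
  have hj : 1 ≤ j := le_trans hk hkj
  have hk0 : (0:ℝ) < (k:ℝ) := by exact_mod_cast hk
  have hj0 : (0:ℝ) < (j:ℝ) := by exact_mod_cast hj
  set s : ℝ := (k:ℝ) * t / (32 * (j:ℝ)) with hsdef
  have hspos : 0 < s := by
    rw [hsdef]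
    exact div_pos (mul_pos hk0 ht) (mul_pos (by norm_num) hj0)
  -- block structure
  set m : ℕ := (j-1)/k + 1 with hmdef
  have hm1 : 1 ≤ m := by
    rw [hmdef]
    exact Nat.le_add_left 1 _
  have hmk1 : (m-1)*k ≤ j - 1 := by
    have : m - 1 = (j-1)/k := by
      rw [hmdef, Nat.add_sub_cancel]
    rw [this]
    exact Nat.div_mul_le_self (j-1) k
  have hjmk : j ≤ m*k := by
    have h2 : j - 1 < m * k := by
      have h3 : (j-1)/k < m := by
        rw [hmdef]
        exact Nat.lt_succ_self _
      exact (Nat.div_lt_iff_lt_mul hk).1 h3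
    omega
  have hmk2 : m*k ≤ 2*j := by
    have e : ((m-1)+1) = m := by omega
    calc m*k = ((m-1)+1)*k := by rw [e]
      _ = (m-1)*k + k := by ring
      _ ≤ (j-1) + k := by omega
      _ ≤ 2*j := by omega
  -- the block decomposition of the index range
  have hcover : Finset.range j
      = (Finset.range m).biUnion (fun l => Finset.Ico (l*k) (min ((l+1)*k) j)) := by
    ext i
    simp only [Finset.mem_range, Finset.mem_biUnion, Finset.mem_Ico, lt_min_iff]
    constructor
    · intro hi
      refine ⟨i / k, ?_, Nat.div_mul_le_self i k, ?_, hi⟩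
      · have h1 : i / k ≤ (j-1)/k := Nat.div_le_div_right (by omega)
        omega
      · exact (Nat.div_lt_iff_lt_mul hk).1 (Nat.lt_succ_self _)
    · rintro ⟨l, _, _, h2, h3⟩
      exact h3
  have hdisj : (↑(Finset.range m) : Set ℕ).PairwiseDisjoint
      (fun l => Finset.Ico (l*k) (min ((l+1)*k) j)) := by
    intro l1 _ l2 _ hne
    apply Finset.disjoint_left.2
    intro i hi1 hi2
    simp only [Finset.mem_Ico, lt_min_iff] at hi1 hi2
    have e1 : i / k = l1 := Nat.div_eq_of_lt_le hi1.1 hi1.2.1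
    have e2 : i / k = l2 := Nat.div_eq_of_lt_le hi2.1 hi2.2.1
    exact hne (e1 ▸ e2)
  have hsplit : ∀ ω, ∑ i ∈ Finset.range j, X i ω
      = ∑ l ∈ Finset.range m, ∑ i ∈ Finset.Ico (l*k) (min ((l+1)*k) j), X i ω := by
    intro ω
    rw [hcover]
    exact Finset.sum_biUnion hdisj
  -- event inclusion
  have hincl : {ω | t < ‖∑ i ∈ Finset.range j, X i ω‖} ⊆
      ⋃ l ∈ Finset.range m,
        {ω | 16*s < ‖∑ i ∈ Finset.Ico (l*k) (min ((l+1)*k) j), X i ω‖} := by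
    intro ω hω
    simp only [Set.mem_setOf_eq] at hω
    by_contra hcon
    simp only [Set.mem_iUnion, not_exists, Set.mem_setOf_eq, not_lt] at hcon
    have hb : ‖∑ i ∈ Finset.range j, X i ω‖
        ≤ ∑ l ∈ Finset.range m, ‖∑ i ∈ Finset.Ico (l*k) (min ((l+1)*k) j), X i ω‖ := by
      rw [hsplit ω]
      exact norm_sum_le _ _
    have hb2 : ∑ l ∈ Finset.range m, ‖∑ i ∈ Finset.Ico (l*k) (min ((l+1)*k) j), X i ω‖
        ≤ (m:ℝ) * (16*s) := by
      refine le_trans (Finset.sum_le_sum (fun l hl => hcon l hl)) ?_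
      rw [Finset.sum_const, Finset.card_range, nsmul_eq_mul]
    have hcontr : (m:ℝ) * (16*s) ≤ t := by
      have hmk2' : (m:ℝ)*(k:ℝ) ≤ 2*(j:ℝ) := by exact_mod_cast hmk2
      have h32 : (0:ℝ) < 32*(j:ℝ) := mul_pos (by norm_num) hj0
      rw [hsdef]
      calc (m:ℝ) * (16*((k:ℝ)*t/(32*(j:ℝ)))) = ((m:ℝ)*(k:ℝ)*t*16)/(32*(j:ℝ)) := by ring
        _ ≤ t := by
          rw [div_le_iff₀ h32]
          nlinarith [mul_le_mul_of_nonneg_right hmk2' ht.le]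
    linarith
  by_cases hp : P {ω | s < ‖∑ i ∈ Finset.range k, X i ω‖} < 1/3
  · -- main case
    have hterm : ∀ l ∈ Finset.range m,
        P {ω | 16*s < ‖∑ i ∈ Finset.Ico (l*k) (min ((l+1)*k) j), X i ω‖}
          ≤ P {ω | s < ‖∑ i ∈ Finset.range k, X i ω‖} := by
      intro l hl
      simp only [Finset.mem_range] at hl
      have hcard : (Finset.Ico (l*k) (min ((l+1)*k) j)).card = min ((l+1)*k) j - l*k :=
        Nat.card_Ico _ _
      have hlk : l*k ≤ (m-1)*k := Nat.mul_le_mul_right k (by omega)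
      have hlk2 : l*k < j := by omega
      have hlk3 : l*k < (l+1)*k := by
        have e : (l+1)*k = l*k + k := by ring
        omega
      have h1 : 1 ≤ (Finset.Ico (l*k) (min ((l+1)*k) j)).card := by
        rw [hcard]
        omega
      have h2 : (Finset.Ico (l*k) (min ((l+1)*k) j)).card ≤ k := by
        rw [hcard]
        have e : (l+1)*k = l*k + k := by ring
        omega
      exact aux_small_sum hX hind hid hk hspos hp _ h1 h2 _ rfl
    calc P {ω | t < ‖∑ i ∈ Finset.range j, X i ω‖}
        ≤ P (⋃ l ∈ Finset.range m,
            {ω | 16*s < ‖∑ i ∈ Finset.Ico (l*k) (min ((l+1)*k) j), X i ω‖}) :=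
          measure_mono hincl
      _ ≤ ∑ l ∈ Finset.range m,
            P {ω | 16*s < ‖∑ i ∈ Finset.Ico (l*k) (min ((l+1)*k) j), X i ω‖} :=
          measure_biUnion_finset_le _ _
      _ ≤ ∑ _l ∈ Finset.range m, P {ω | s < ‖∑ i ∈ Finset.range k, X i ω‖} :=
          Finset.sum_le_sum hterm
      _ = (m : ℝ≥0∞) * P {ω | s < ‖∑ i ∈ Finset.range k, X i ω‖} := by
          rw [Finset.sum_const, Finset.card_range, nsmul_eq_mul]
      _ ≤ ENNReal.ofReal (3 * (j:ℝ) / (k:ℝ))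
            * P {ω | s < ‖∑ i ∈ Finset.range k, X i ω‖} := by
          refine mul_le_mul_left ?_ _
          rw [← ENNReal.ofReal_natCast m]
          apply ENNReal.ofReal_le_ofReal
          rw [le_div_iff₀ hk0]
          have hmk2' : (m:ℝ)*(k:ℝ) ≤ 2*(j:ℝ) := by exact_mod_cast hmk2
          linarith
  · push_neg at hp
    refine le_trans (prob_le_one) ?_
    have h3 : (3:ℝ≥0∞) ≤ ENNReal.ofReal (3 * (j:ℝ) / (k:ℝ)) := by
      have e : (3:ℝ≥0∞) = ENNReal.ofReal 3 := by
        rw [ENNReal.ofReal_ofNat]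
      rw [e]
      apply ENNReal.ofReal_le_ofReal
      rw [le_div_iff₀ hk0]
      have : (k:ℝ) ≤ (j:ℝ) := by exact_mod_cast hkj
      linarith
    calc (1:ℝ≥0∞) = 3 * (1/3) := by
          rw [one_div, ENNReal.mul_inv_cancel (by norm_num) (by norm_num)]
      _ ≤ ENNReal.ofReal (3 * (j:ℝ) / (k:ℝ))
            * P {ω | s < ‖∑ i ∈ Finset.range k, X i ω‖} := mul_le_mul' h3 hp
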